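/- Lovász's version of the Kruskal–Katona theorem: if F ⊆ binom([n],k) and x is the unique real number with k ≤ x ≤ n and |F| = C(x,k) (generalized binomial coefficient), then for every 0 ≤ i < k, |∂^i F| ≥ C(x, i). -/

import Mathlib

open Finset

def levShadow (j : ℕ) (G : Finset (Finset ℕ)) : Finset (Finset ℕ) :=
  G.biUnion fun A => A.powersetCard j

/-- Generalized binomial coefficient `C(x, k)` for real `x`. -/
noncomputable def genChoose (x : ℝ) (k : ℕ) : ℝ :=
  (∏ i ∈ Finset.range k, (x - i)) / (Nat.factorial k)

open scoped FinsetFamily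


lemma genChoose_zero (x : ℝ) : genChoose x 0 = 1 := by simp [genChoose]

lemma genChoose_pos' {x : ℝ} {k : ℕ} (h : (k : ℝ) ≤ x) : 0 < genChoose x k := by
  apply div_pos
  · refine Finset.prod_pos fun i hi => ?_
    rw [Finset.mem_range] at hi
    have : (i : ℝ) < k := by exact_mod_cast hi
    linarith
  · exact_mod_cast Nat.factorial_pos k

lemma genChoose_pascal (x : ℝ) (k : ℕ) :
    genChoose x (k+1) = genChoose (x-1) (k+1) + genChoose (x-1) k := by
  have h1 : ∏ i ∈ Finset.range (k+1), (x - i) = x * ∏ i ∈ Finset.range k, (x - 1 - i) := by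
    rw [Finset.prod_range_succ' (fun i => x - i) k]
    push_cast
    ring_nf
  have h2 : ∏ i ∈ Finset.range (k+1), (x - 1 - i) =
      (∏ i ∈ Finset.range k, (x - 1 - i)) * (x - 1 - k) := Finset.prod_range_succ _ _
  have hf : (Nat.factorial (k+1) : ℝ) = (k+1) * Nat.factorial k := by
    rw [Nat.factorial_succ]; push_cast; ring
  have hk0 : (Nat.factorial k : ℝ) ≠ 0 := by exact_mod_cast (Nat.factorial_pos k).ne'
  have hk1 : ((k:ℝ)+1) ≠ 0 := by positivity
  rw [genChoose, genChoose, genChoose, h1, h2, hf]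
  field_simp
  ring

private lemma prod_add_two (k : ℕ) : ∏ i ∈ Finset.range k, ((i:ℝ) + 2) = Nat.factorial (k+1) := by
  induction k with
  | zero => simp
  | succ m ih =>
    rw [Finset.prod_range_succ, ih]
    push_cast [Nat.factorial_succ]
    ring

lemma genChoose_le_succ {x : ℝ} {k : ℕ} (h1 : (k : ℝ) ≤ x) (h2 : x ≤ (k:ℝ)+1) :
    genChoose x k ≤ (k:ℝ) + 1 := by
  have hp : ∏ i ∈ Finset.range k, (x - i) ≤ ∏ i ∈ Finset.range k, ((k:ℝ) + 1 - i) := by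
    apply Finset.prod_le_prod
    · intro i hi
      rw [Finset.mem_range] at hi
      have : (i:ℝ) + 1 ≤ k := by exact_mod_cast hi
      linarith
    · intro i _; linarith
  have hq : ∏ i ∈ Finset.range k, ((k:ℝ) + 1 - i) = Nat.factorial (k+1) := by
    rw [← Finset.prod_range_reflect]
    have : ∀ j ∈ Finset.range k, ((k:ℝ) + 1 - (k - 1 - j : ℕ)) = ((j:ℕ) + 2 : ℝ) := by
      intro j hj
      rw [Finset.mem_range] at hj
      have hcast : ((k - 1 - j : ℕ) : ℝ) = (k:ℝ) - 1 - j := by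
        have h1' : j ≤ k - 1 := Nat.le_pred_of_lt hj
        have h2' : 1 ≤ k := Nat.one_le_iff_ne_zero.2 (by omega)
        push_cast [Nat.cast_sub h1', Nat.cast_sub h2']
        ring
      rw [hcast]; ring
    rw [Finset.prod_congr rfl this, prod_add_two]
  have hfk : (0:ℝ) < Nat.factorial k := by exact_mod_cast Nat.factorial_pos k
  rw [genChoose, div_le_iff₀ hfk]
  calc ∏ i ∈ Finset.range k, (x - i) ≤ Nat.factorial (k+1) := hp.trans_eq hq
    _ = ((k:ℝ)+1) * Nat.factorial k := by push_cast [Nat.factorial_succ]; ring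

-- ===== family machinery =====
def Shifted (F : Finset (Finset ℕ)) : Prop :=
  ∀ A ∈ F, ∀ j ∈ A, ∀ i < j, i ∉ A → insert i (A.erase j) ∈ F

def link (F : Finset (Finset ℕ)) : Finset (Finset ℕ) :=
  (F.filter (fun A => 0 ∈ A)).image (fun A => A.erase 0)

def del (F : Finset (Finset ℕ)) : Finset (Finset ℕ) := F.filter (fun A => 0 ∉ A)

def DD (G : Finset (Finset ℕ)) : Finset (Finset ℕ) := G.image (Finset.image (· - 1))

def UU (B : Finset ℕ) : Finset ℕ := B.image (· + 1)

lemma UU_pred {S : Finset ℕ} (h : 0 ∉ S) : UU (S.image (· - 1)) = S := by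
  ext a
  simp only [UU, Finset.mem_image]
  constructor
  · rintro ⟨b, ⟨c, hc, rfl⟩, rfl⟩
    have : c ≠ 0 := fun h0 => h (h0 ▸ hc)
    have : c - 1 + 1 = c := by omega
    rwa [this]
  · intro ha
    have ha' : a ≠ 0 := fun h0 => h (h0 ▸ ha)
    exact ⟨a - 1, ⟨a, ha, rfl⟩, by omega⟩

lemma pred_UU (B : Finset ℕ) : (UU B).image (· - 1) = B := by
  ext a
  simp only [UU, Finset.mem_image]
  constructor
  · rintro ⟨b, ⟨c, hc, rfl⟩, rfl⟩; simpa using hc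
  · intro ha; exact ⟨a + 1, ⟨a, ha, rfl⟩, by omega⟩

lemma zero_not_mem_UU (B : Finset ℕ) : 0 ∉ UU B := by
  simp [UU]

lemma UU_injective : Function.Injective UU := by
  intro a b h
  have := congrArg (Finset.image (· - 1)) h
  rwa [pred_UU, pred_UU] at this

lemma mem_DD {G : Finset (Finset ℕ)} (hG : ∀ S ∈ G, (0:ℕ) ∉ S) (B : Finset ℕ) :
    B ∈ DD G ↔ UU B ∈ G := by
  constructor
  · rintro hB
    obtain ⟨S, hS, rfl⟩ := Finset.mem_image.1 hB
    rwa [UU_pred (hG S hS)]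
  · intro h
    exact Finset.mem_image.2 ⟨UU B, h, pred_UU B⟩

lemma image_UU_DD {G : Finset (Finset ℕ)} (hG : ∀ S ∈ G, (0:ℕ) ∉ S) :
    (DD G).image UU = G := by
  ext S
  simp only [Finset.mem_image]
  constructor
  · rintro ⟨B, hB, rfl⟩
    exact (mem_DD hG B).1 hB
  · intro hS
    exact ⟨S.image (· - 1), Finset.mem_image.2 ⟨S, hS, rfl⟩, UU_pred (hG S hS)⟩

lemma card_DD {G : Finset (Finset ℕ)} (hG : ∀ S ∈ G, (0:ℕ) ∉ S) :
    (DD G).card = G.card := by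
  conv_rhs => rw [← image_UU_DD hG]
  rw [Finset.card_image_of_injective _ UU_injective]

lemma shadow_image_inj {f : ℕ → ℕ} (hf : Function.Injective f) (G : Finset (Finset ℕ)) :
    ∂ (G.image (Finset.image f)) = (∂ G).image (Finset.image f) := by
  ext B
  simp only [mem_shadow_iff, Finset.mem_image]
  constructor
  · rintro ⟨C, ⟨A, hA, rfl⟩, a, ha, rfl⟩
    obtain ⟨b, hb, rfl⟩ := Finset.mem_image.1 ha
    exact ⟨A.erase b, ⟨A, hA, b, hb, rfl⟩, (Finset.image_erase hf A b)⟩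
  · rintro ⟨C, ⟨A, hA, a, ha, rfl⟩, rfl⟩
    exact ⟨A.image f, ⟨A, hA, rfl⟩, f a, Finset.mem_image_of_mem f ha,
      (Finset.image_erase hf A a).symm⟩

lemma mem_link {F : Finset (Finset ℕ)} {S : Finset ℕ} :
    S ∈ link F ↔ (0 ∉ S ∧ insert 0 S ∈ F) := by
  simp only [link, Finset.mem_image, Finset.mem_filter]
  constructor
  · rintro ⟨A, ⟨hA, h0⟩, rfl⟩
    exact ⟨Finset.notMem_erase _ _, by rwa [Finset.insert_erase h0]⟩
  · rintro ⟨h0, hS⟩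
    exact ⟨insert 0 S, ⟨hS, Finset.mem_insert_self _ _⟩, by rw [Finset.erase_insert h0]⟩

lemma zero_not_mem_link {F : Finset (Finset ℕ)} : ∀ S ∈ link F, (0:ℕ) ∉ S :=
  fun _ hS => (mem_link.1 hS).1

lemma mem_del {F : Finset (Finset ℕ)} {S : Finset ℕ} :
    S ∈ del F ↔ (S ∈ F ∧ 0 ∉ S) := Finset.mem_filter

lemma zero_not_mem_del {F : Finset (Finset ℕ)} : ∀ S ∈ del F, (0:ℕ) ∉ S :=
  fun _ hS => (mem_del.1 hS).2

lemma card_del_add_card_link (F : Finset (Finset ℕ)) :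
    F.card = (del F).card + (link F).card := by
  have h1 : (link F).card = (F.filter (fun A => 0 ∈ A)).card := by
    rw [link, Finset.card_image_of_injOn]
    intro A hA B hB hAB
    rw [Finset.mem_coe, Finset.mem_filter] at hA hB
    simp only at hAB
    rw [← Finset.insert_erase hA.2, hAB, Finset.insert_erase hB.2]
  rw [h1, del]
  rw [← Finset.card_filter_add_card_filter_not (p := fun A => (0:ℕ) ∉ A)]
  congr 2
  ext A
  simp

lemma sized_DD {G : Finset (Finset ℕ)} {k : ℕ} (hG : ∀ S ∈ G, (0:ℕ) ∉ S)
    (hsz : (G : Set (Finset ℕ)).Sized k) : ((DD G : Finset (Finset ℕ)) : Set (Finset ℕ)).Sized k := by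
  intro B hB
  rw [Finset.mem_coe] at hB
  obtain ⟨S, hS, rfl⟩ := Finset.mem_image.1 hB
  rw [Finset.card_image_of_injOn]
  · exact hsz hS
  · intro a ha b hb hab
    have ha' : a ≠ 0 := fun h => hG S hS (h ▸ ha)
    have hb' : b ≠ 0 := fun h => hG S hS (h ▸ hb)
    simp only at hab
    omega

lemma card_shadow_DD {G : Finset (Finset ℕ)} (hG : ∀ S ∈ G, (0:ℕ) ∉ S) :
    (∂ (DD G)).card = (∂ G).card := by
  have h1 : G = (DD G).image (Finset.image (· + 1)) := by
    conv_lhs => rw [← image_UU_DD hG]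
    rfl
  conv_rhs => rw [h1, shadow_image_inj (fun a b h => by omega)]
  rw [Finset.card_image_of_injective _ (Finset.image_injective (fun a b h => by omega))]

lemma sized_link {F : Finset (Finset ℕ)} {k : ℕ} (hsz : (F : Set (Finset ℕ)).Sized (k+1)) :
    ((link F : Finset (Finset ℕ)) : Set (Finset ℕ)).Sized k := by
  intro S hS
  rw [Finset.mem_coe, mem_link] at hS
  have := hsz hS.2
  rw [Finset.card_insert_of_notMem hS.1] at this
  omega

lemma sized_del {F : Finset (Finset ℕ)} {k : ℕ} (hsz : (F : Set (Finset ℕ)).Sized k) :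
    ((del F : Finset (Finset ℕ)) : Set (Finset ℕ)).Sized k :=
  fun S hS => hsz (mem_del.1 hS).1

lemma link_subset_shadow {F : Finset (Finset ℕ)} : link F ⊆ ∂ F := by
  intro S hS
  rw [mem_link] at hS
  exact mem_shadow_iff.2 ⟨insert 0 S, hS.2, 0, Finset.mem_insert_self _ _,
    Finset.erase_insert hS.1⟩

lemma shadow_del_subset_link {F : Finset (Finset ℕ)} (hS : Shifted F) :
    ∂ (del F) ⊆ link F := by
  intro S hSs
  obtain ⟨A, hA, a, ha, rfl⟩ := mem_shadow_iff.1 hSs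
  rw [mem_del] at hA
  have ha0 : 0 < a := Nat.pos_of_ne_zero (fun h => hA.2 (h ▸ ha))
  have := hS A hA.1 a ha 0 ha0 hA.2
  rw [mem_link]
  exact ⟨fun h => hA.2 (Finset.mem_of_mem_erase h), this⟩

lemma link_nonempty {F : Finset (Finset ℕ)} {k : ℕ} (hS : Shifted F)
    (hne : F.Nonempty) (hsz : (F : Set (Finset ℕ)).Sized (k+1)) : (link F).Nonempty := by
  obtain ⟨A, hA⟩ := hne
  by_cases h0 : 0 ∈ A
  · exact ⟨A.erase 0, mem_link.2 ⟨Finset.notMem_erase _ _, by rwa [Finset.insert_erase h0]⟩⟩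
  · have hAne : A.Nonempty := Finset.card_pos.1 (by rw [hsz hA]; omega)
    obtain ⟨a, ha⟩ := hAne
    have ha0 : 0 < a := Nat.pos_of_ne_zero (fun h => h0 (h ▸ ha))
    have hin := hS A hA a ha 0 ha0 h0
    exact ⟨A.erase a, mem_link.2 ⟨fun h => h0 (Finset.mem_of_mem_erase h), hin⟩⟩

lemma zero_not_mem_shadow_link {F : Finset (Finset ℕ)} :
    ∀ S ∈ ∂ (link F), (0:ℕ) ∉ S := by
  intro S hS
  obtain ⟨T, hT, a, ha, rfl⟩ := mem_shadow_iff.1 hS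
  exact fun h => zero_not_mem_link T hT (Finset.mem_of_mem_erase h)

lemma shadow_card_decomp {F : Finset (Finset ℕ)} :
    (link F).card + (∂ (link F)).card ≤ (∂ F).card := by
  classical
  have hsub1 : link F ⊆ ∂ F := link_subset_shadow
  have hsub2 : (∂ (link F)).image (insert 0) ⊆ ∂ F := by
    intro B hB
    obtain ⟨S, hSm, rfl⟩ := Finset.mem_image.1 hB
    obtain ⟨T, hT, a, ha, rfl⟩ := mem_shadow_iff.1 hSm
    rw [mem_link] at hT
    have ha0 : a ≠ 0 := fun h => hT.1 (h ▸ ha)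
    refine mem_shadow_iff.2 ⟨insert 0 T, hT.2, a, Finset.mem_insert_of_mem ha, ?_⟩
    rw [Finset.erase_insert_of_ne ha0.symm]
  have hdisj : Disjoint (link F) ((∂ (link F)).image (insert 0)) := by
    rw [Finset.disjoint_left]
    intro S hS hS'
    obtain ⟨T, _, rfl⟩ := Finset.mem_image.1 hS'
    exact zero_not_mem_link _ hS (Finset.mem_insert_self _ _)
  have hcard : ((∂ (link F)).image (insert 0)).card = (∂ (link F)).card := by
    rw [Finset.card_image_of_injOn]
    intro A hA B hB hAB
    rw [Finset.mem_coe] at hA hB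
    have hA0 := zero_not_mem_shadow_link A hA
    have hB0 := zero_not_mem_shadow_link B hB
    rw [← Finset.erase_insert hA0, hAB, Finset.erase_insert hB0]
  calc (link F).card + (∂ (link F)).card
      = (link F ∪ (∂ (link F)).image (insert 0)).card := by
        rw [Finset.card_union_of_disjoint hdisj, hcard]
    _ ≤ (∂ F).card := Finset.card_le_card (Finset.union_subset hsub1 hsub2)

lemma mem_UU_succ (a : ℕ) (B : Finset ℕ) : a + 1 ∈ UU B ↔ a ∈ B := by
  simp [UU]

lemma UU_shift (B : Finset ℕ) (i j : ℕ) :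
    UU (insert i (B.erase j)) = insert (i+1) ((UU B).erase (j+1)) := by
  ext a
  simp only [UU, Finset.mem_image, Finset.mem_insert, Finset.mem_erase]
  constructor
  · rintro ⟨b, rfl | ⟨hbj, hbB⟩, rfl⟩
    · exact Or.inl rfl
    · exact Or.inr ⟨by omega, b, hbB, rfl⟩
  · rintro (rfl | ⟨haj, b, hbB, rfl⟩)
    · exact ⟨i, Or.inl rfl, rfl⟩
    · exact ⟨b, Or.inr ⟨by omega, hbB⟩, rfl⟩

lemma shifted_DD_link {F : Finset (Finset ℕ)} (hF : Shifted F) : Shifted (DD (link F)) := by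
  intro B hB j hj i hij hi
  rw [mem_DD zero_not_mem_link] at hB ⊢
  rw [mem_link] at hB ⊢
  obtain ⟨h0, hmem⟩ := hB
  rw [UU_shift]
  refine ⟨?_, ?_⟩
  · simp only [Finset.mem_insert, Finset.mem_erase]
    rintro (h | ⟨-, h⟩)
    · omega
    · exact zero_not_mem_UU _ h
  · have key : insert 0 (insert (i+1) ((UU B).erase (j+1)))
        = insert (i+1) ((insert 0 (UU B)).erase (j+1)) := by
      rw [Finset.insert_comm, Finset.erase_insert_of_ne (by omega)]
    rw [key]
    apply hF _ hmem (j+1)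
    · exact Finset.mem_insert_of_mem ((mem_UU_succ j B).2 hj)
    · omega
    · simp only [Finset.mem_insert]
      push_neg
      exact ⟨by omega, fun h => hi ((mem_UU_succ i B).1 h)⟩

lemma shifted_DD_del {F : Finset (Finset ℕ)} (hF : Shifted F) : Shifted (DD (del F)) := by
  intro B hB j hj i hij hi
  rw [mem_DD zero_not_mem_del] at hB ⊢
  rw [mem_del] at hB ⊢
  obtain ⟨hmem, h0⟩ := hB
  rw [UU_shift]
  refine ⟨?_, ?_⟩
  · apply hF _ hmem (j+1)
    · exact (mem_UU_succ j B).2 hj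
    · omega
    · exact fun h => hi ((mem_UU_succ i B).1 h)
  · simp only [Finset.mem_insert, Finset.mem_erase]
    rintro (h | ⟨-, h⟩)
    · omega
    · exact zero_not_mem_UU _ h

lemma shadow_card_ge_of_sized {F : Finset (Finset ℕ)} {k : ℕ}
    (hsz : (F : Set (Finset ℕ)).Sized (k+1)) (hne : F.Nonempty) :
    (k+1 : ℕ) ≤ (∂ F).card := by
  obtain ⟨A, hA⟩ := hne
  have hsub : A.image A.erase ⊆ ∂ F := by
    intro S hS
    obtain ⟨a, ha, rfl⟩ := Finset.mem_image.1 hS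
    exact mem_shadow_iff.2 ⟨A, hA, a, ha, rfl⟩
  calc (k+1 : ℕ) = A.card := (hsz hA).symm
    _ = (A.image A.erase).card := (Finset.card_image_of_injOn (Finset.erase_injOn A)).symm
    _ ≤ (∂ F).card := Finset.card_le_card hsub

def fmeasure (F : Finset (Finset ℕ)) : ℕ := ∑ A ∈ F, ∑ a ∈ A, a

lemma compress_singleton {i j : ℕ} {A : Finset ℕ} (hi : i ∉ A) (hj : j ∈ A) :
    UV.compress {i} {j} A = insert i (A.erase j) := by
  rw [UV.compress, if_pos]
  · ext a
    simp only [sup_eq_union, sdiff_singleton_eq_erase, Finset.mem_erase, Finset.mem_union,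
      Finset.mem_insert, Finset.mem_singleton]
    constructor
    · rintro ⟨haj, hA | rfl⟩
      · exact Or.inr ⟨haj, hA⟩
      · exact Or.inl rfl
    · rintro (rfl | ⟨haj, hA⟩)
      · exact ⟨fun h => hi (h ▸ hj), Or.inr rfl⟩
      · exact ⟨haj, Or.inl hA⟩
  · exact ⟨Finset.disjoint_singleton_left.2 hi, Finset.singleton_subset_iff.2 hj⟩

lemma fmeasure_compression_lt {i j : ℕ} (hij : i < j) {F : Finset (Finset ℕ)}
    (hne : 𝓒 {i} {j} F ≠ F) : fmeasure (𝓒 {i} {j} F) < fmeasure F := by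
  classical
  rw [UV.compression] at hne ⊢
  have q : ∀ Q ∈ {A ∈ F | UV.compress {i} {j} A ∉ F}, UV.compress {i} {j} Q ≠ Q := by
    simp_rw [Finset.mem_filter]
    rintro Q hQ h
    rw [h] at hQ
    exact hQ.2 hQ.1
  have uA : {A ∈ F | UV.compress {i} {j} A ∈ F} ∪ {A ∈ F | UV.compress {i} {j} A ∉ F} = F :=
    Finset.filter_union_filter_not_eq _ _
  have ne₂ : {A ∈ F | UV.compress {i} {j} A ∉ F}.Nonempty := by
    refine Finset.nonempty_iff_ne_empty.2 fun z => hne ?_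
    rw [Finset.filter_image, z, Finset.image_empty, Finset.union_empty]
    rwa [z, Finset.union_empty] at uA
  rw [fmeasure, fmeasure, Finset.sum_union UV.compress_disjoint]
  conv_rhs => rw [← uA]
  rw [Finset.sum_union (Finset.disjoint_filter_filter_not _ _ _), add_lt_add_iff_left,
    Finset.filter_image, Finset.sum_image UV.compress_injOn]
  refine Finset.sum_lt_sum_of_nonempty ne₂ fun A hA => ?_
  have hQ := q A hA
  rw [Finset.mem_filter] at hA
  -- compress must have fired
  have hcond : i ∉ A ∧ j ∈ A := by
    by_contra h
    apply hQ
    rw [UV.compress, if_neg]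
    intro ⟨h1, h2⟩
    exact h ⟨Finset.disjoint_singleton_left.1 h1, Finset.singleton_subset_iff.1 h2⟩
  rw [compress_singleton hcond.1 hcond.2]
  have hi' : i ∉ A.erase j := fun h => hcond.1 (Finset.mem_of_mem_erase h)
  have h1 : ∑ a ∈ insert i (A.erase j), a = i + ∑ a ∈ A.erase j, a := Finset.sum_insert hi'
  have h2 : ∑ a ∈ A.erase j, a + j = ∑ a ∈ A, a := Finset.sum_erase_add A _ hcond.2
  omega

lemma exists_shifted : ∀ (m : ℕ) (F : Finset (Finset ℕ)), fmeasure F ≤ m →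
    ∃ B : Finset (Finset ℕ), Shifted B ∧ B.card = F.card ∧ (∂ B).card ≤ (∂ F).card ∧
      (∀ k, (F : Set (Finset ℕ)).Sized k → (B : Set (Finset ℕ)).Sized k) := by
  intro m
  induction m with
  | zero =>
    intro F hm
    by_cases hS : Shifted F
    · exact ⟨F, hS, rfl, le_rfl, fun _ h => h⟩
    · exfalso
      simp only [Shifted, not_forall] at hS
      obtain ⟨A, hA, j, hj, i, hij, hi, hni⟩ := hS
      have := fmeasure_compression_lt hij (F := F) (fun h => hni (by
        have := UV.compress_mem_compression (u := {i}) (v := {j}) hA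
        rw [h, compress_singleton hi hj] at this
        exact this))
      omega
  | succ m ih =>
    intro F hm
    by_cases hS : Shifted F
    · exact ⟨F, hS, rfl, le_rfl, fun _ h => h⟩
    · simp only [Shifted, not_forall] at hS
      obtain ⟨A, hA, j, hj, i, hij, hi, hni⟩ := hS
      have hne : 𝓒 {i} {j} F ≠ F := fun h => hni (by
        have := UV.compress_mem_compression (u := {i}) (v := {j}) hA
        rw [h, compress_singleton hi hj] at this
        exact this)
      have hlt := fmeasure_compression_lt hij hne
      have huv : ∀ x ∈ ({i} : Finset ℕ), ∃ y ∈ ({j} : Finset ℕ),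
          UV.IsCompressed (({i} : Finset ℕ).erase x) (({j} : Finset ℕ).erase y) F := by
        intro x hx
        rw [Finset.mem_singleton] at hx
        subst hx
        refine ⟨j, Finset.mem_singleton_self j, ?_⟩
        rw [Finset.erase_singleton, Finset.erase_singleton]
        exact UV.compression_self ∅ F
      obtain ⟨B, hB1, hB2, hB3, hB4⟩ := ih (𝓒 {i} {j} F) (by omega)
      refine ⟨B, hB1, ?_, ?_, ?_⟩
      · rw [hB2, UV.card_compression]
      · exact hB3.trans (UV.card_shadow_compression_le _ _ huv)
      · intro k hk
        exact hB4 k (hk.uvCompression (by simp))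

lemma genChoose_nonneg {x : ℝ} {k : ℕ} (h : (k:ℝ) - 1 ≤ x) : 0 ≤ genChoose x k := by
  apply div_nonneg
  · apply Finset.prod_nonneg
    intro i hi
    rw [Finset.mem_range] at hi
    have : (i:ℝ) + 1 ≤ k := by exact_mod_cast hi
    linarith
  · positivity

lemma KL : ∀ (k c : ℕ) (F : Finset (Finset ℕ)), F.card ≤ c → Shifted F →
    (F : Set (Finset ℕ)).Sized (k+1) → F.Nonempty → ∀ x : ℝ, (k:ℝ) ≤ x →
    genChoose x (k+1) ≤ (F.card : ℝ) → genChoose x k ≤ ((∂ F).card : ℝ) := by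
  intro k
  induction k with
  | zero =>
    intro c F _ hS hsz hne x hx hcard
    rw [genChoose_zero]
    have h := shadow_card_ge_of_sized hsz hne
    exact_mod_cast Nat.one_le_iff_ne_zero.2 (by omega)
  | succ k ihk =>
    intro c
    induction c with
    | zero =>
      intro F hc _ _ hne
      exact absurd (Finset.card_pos.2 hne) (by omega)
    | succ c ihc =>
      intro F hc hS hsz hne x hx hcard
      have hx' : (k:ℝ) + 1 ≤ x := by exact_mod_cast hx
      by_cases hx2 : x < (k:ℝ) + 2
      · have h1 := shadow_card_ge_of_sized hsz hne
        have h2 : genChoose x (k+1) ≤ ((k:ℝ)+1) + 1 := by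
          have ha : ((k+1 : ℕ):ℝ) ≤ x := by exact_mod_cast hx
          have hb : x ≤ ((k+1:ℕ):ℝ) + 1 := by push_cast; linarith
          have := genChoose_le_succ (x := x) (k := k+1) ha hb
          push_cast at this ⊢
          linarith
        have h3 : ((k:ℝ)+1) + 1 ≤ ((∂ F).card : ℝ) := by exact_mod_cast h1
        linarith
      · push_neg at hx2
        have hlinkne : (link F).Nonempty := link_nonempty hS hne hsz
        have hcards : F.card = (del F).card + (link F).card := card_del_add_card_link F
        have hcards' : (F.card : ℝ) = ((del F).card : ℝ) + ((link F).card : ℝ) := by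
          exact_mod_cast hcards
        have hcard1 : (DD (link F)).card = (link F).card := card_DD zero_not_mem_link
        by_cases hA : genChoose (x-1) (k+1) ≤ ((link F).card : ℝ)
        · -- Case A
          have ih := ihk (link F).card (DD (link F)) hcard1.le (shifted_DD_link hS)
            (sized_DD zero_not_mem_link (sized_link hsz))
            (by rw [← Finset.card_pos, hcard1]; exact Finset.card_pos.2 hlinkne)
            (x-1) (by linarith) (by rw [hcard1]; exact hA)
          rw [card_shadow_DD zero_not_mem_link] at ih
          have hdec := shadow_card_decomp (F := F)
          have hpas := genChoose_pascal x k
          have hdec' : ((link F).card : ℝ) + ((∂ (link F)).card : ℝ) ≤ ((∂ F).card : ℝ) := by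
            exact_mod_cast hdec
          linarith
        · -- Case B: contradiction
          exfalso
          push_neg at hA
          have hpas : genChoose x (k+1+1) = genChoose (x-1) (k+1+1) + genChoose (x-1) (k+1) :=
            genChoose_pascal x (k+1)
          have hF0 : genChoose (x-1) (k+1+1) < ((del F).card : ℝ) := by linarith
          have hgc0 : (0:ℝ) ≤ genChoose (x-1) (k+1+1) := by
            apply genChoose_nonneg
            push_cast
            linarith
          have hF0pos : (del F).Nonempty := by
            rw [← Finset.card_pos]
            by_contra h
            push_neg at h
            have h0 : (del F).card = 0 := by omega
            rw [h0] at hF0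
            norm_num at hF0
            linarith
          have hcard0 : (DD (del F)).card = (del F).card := card_DD zero_not_mem_del
          have hc0 : (del F).card ≤ c := by
            have h1 : 1 ≤ (link F).card := Finset.card_pos.2 hlinkne
            omega
          have ih := ihc (DD (del F)) (by omega) (shifted_DD_del hS)
            (sized_DD zero_not_mem_del (sized_del hsz))
            (by rw [← Finset.card_pos, hcard0]; exact Finset.card_pos.2 hF0pos)
            (x-1) (by push_cast; linarith) (by rw [hcard0]; exact hF0.le)
          rw [card_shadow_DD zero_not_mem_del] at ih
          have hsub : (∂ (del F)).card ≤ (link F).card :=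
            Finset.card_le_card (shadow_del_subset_link hS)
          have hsub' : ((∂ (del F)).card : ℝ) ≤ ((link F).card : ℝ) := by exact_mod_cast hsub
          linarith

lemma KL' {k : ℕ} {F : Finset (Finset ℕ)} (hsz : (F : Set (Finset ℕ)).Sized (k+1))
    (hne : F.Nonempty) {x : ℝ} (hx : (k:ℝ) ≤ x) (hcard : genChoose x (k+1) ≤ (F.card : ℝ)) :
    genChoose x k ≤ ((∂ F).card : ℝ) := by
  obtain ⟨B, hBs, hBc, hBsh, hBsz⟩ := exists_shifted (fmeasure F) F le_rfl
  have hBne : B.Nonempty := by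
    rw [← Finset.card_pos, hBc]
    exact Finset.card_pos.2 hne
  have h := KL k B.card B le_rfl hBs (hBsz _ hsz) hBne x hx (by rw [hBc]; exact hcard)
  calc genChoose x k ≤ ((∂ B).card : ℝ) := h
    _ ≤ ((∂ F).card : ℝ) := by exact_mod_cast hBsh

lemma levShadow_eq {k i : ℕ} {F : Finset (Finset ℕ)} (hsz : (F : Set (Finset ℕ)).Sized k)
    (hik : i ≤ k) : levShadow i F = ∂^[k-i] F := by
  ext B
  rw [mem_shadow_iterate_iff_exists_sdiff]
  simp only [levShadow, Finset.mem_biUnion, Finset.mem_powersetCard]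
  constructor
  · rintro ⟨A, hA, hBA, hBcard⟩
    refine ⟨A, hA, hBA, ?_⟩
    rw [Finset.card_sdiff_of_subset hBA, hsz hA, hBcard]
  · rintro ⟨A, hA, hBA, hcard⟩
    refine ⟨A, hA, hBA, ?_⟩
    have h1 := Finset.card_sdiff_of_subset hBA
    have h2 := Finset.card_le_card hBA
    have h3 := hsz hA
    omega

theorem stmt12 (n k : ℕ) (F : Finset (Finset ℕ))
    (hF : F ⊆ (Finset.Icc 1 n).powersetCard k)
    (x : ℝ) (hxk : (k : ℝ) ≤ x) (hxn : x ≤ (n : ℝ))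
    (hcard : (F.card : ℝ) = genChoose x k) :
    ∀ i : ℕ, i < k → genChoose x i ≤ ((levShadow i F).card : ℝ) := by
  have hsz : (F : Set (Finset ℕ)).Sized k := by
    intro A hA
    exact (Finset.mem_powersetCard.1 (hF hA)).2
  have claim : ∀ j m : ℕ, j + m = k → genChoose x m ≤ (((∂^[j] F) : Finset (Finset ℕ)).card : ℝ) := by
    intro j
    induction j with
    | zero =>
      intro m hm
      simp only [Function.iterate_zero, id]
      rw [show m = k by omega]
      exact hcard.ge
    | succ j ih =>
      intro m hm
      have hprev := ih (m+1) (by omega)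
      have hszj : ((∂^[j] F : Finset (Finset ℕ)) : Set (Finset ℕ)).Sized (m+1) := by
        have := hsz.shadow_iterate (k := j)
        rwa [show k - j = m + 1 by omega] at this
      have hxm : ((m:ℝ)+1) ≤ x := by
        have : (m:ℝ) + 1 ≤ (k:ℝ) := by
          have : m + 1 ≤ k := by omega
          exact_mod_cast this
        linarith
      have hne : (∂^[j] F : Finset (Finset ℕ)).Nonempty := by
        rw [← Finset.card_pos]
        by_contra h
        push_neg at h
        have h0 : (∂^[j] F : Finset (Finset ℕ)).card = 0 := by omega
        rw [h0] at hprev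
        have := genChoose_pos' (k := m+1) (x := x) (by exact_mod_cast hxm)
        norm_num at hprev
        linarith
      have := KL' hszj hne (by linarith : (m:ℝ) ≤ x) hprev
      rwa [Function.iterate_succ_apply']
  intro i hik
  rw [levShadow_eq hsz hik.le]
  exact claim (k-i) i (by omega)
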